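/- arXiv:2006.01953 — 5 statements merged into one kernel-verified Lean document; each statement's English description precedes it below -/
import Mathlib

section
/- Let p : X → Y be a quotient map between topological spaces and let Δ be the partition of X into fibers of p. Suppose that for every compact L ⊆ Y there exists a compact K ⊆ X with p(K) = L (property (K)). Then the induced map ψ : End(X,Δ) → End(Y), sending a Δ-map f to the unique continuous g : Y → Y with p ∘ f = g ∘ p, is continuous with respect to the compact-open topologies. -/
/-- A `Δ`-map is a continuous self-map of `X` mapping fibers of `p` into fibers of `p`;
`End(X,Δ)` is the space of all `Δ`-maps with the compact-open topology. -/
def DeltaEnd {X Y : Type*} [TopologicalSpace X] (p : X → Y) : Type _ :=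
  { f : C(X, X) // ∀ x x' : X, p x = p x' → p (f x) = p (f x') }

instance {X Y : Type*} [TopologicalSpace X] (p : X → Y) :
    TopologicalSpace (DeltaEnd p) :=
  instTopologicalSpaceSubtype

/-- If `p : X → Y` is a quotient map with property (K) (every compact `L ⊆ Y` is the
image of some compact `K ⊆ X`), then the induced map `ψ : End(X,Δ) → End(Y)`,
characterized by `p ∘ f = ψ(f) ∘ p`, is continuous for the compact-open topologies. -/
theorem induced_map_continuous_of_propK
    {X Y : Type*} [TopologicalSpace X] [TopologicalSpace Y]
    {p : X → Y} (hp : Topology.IsQuotientMap p)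
    (hK : ∀ L : Set Y, IsCompact L → ∃ K : Set X, IsCompact K ∧ p '' K = L)
    (ψ : DeltaEnd p → C(Y, Y))
    (hψ : ∀ f : DeltaEnd p, ∀ x : X, (ψ f) (p x) = p (f.1 x)) :
    Continuous ψ := by
  rw [ContinuousMap.continuous_compactOpen]
  intro L hL U hU
  obtain ⟨K, hKc, hKL⟩ := hK L hL
  have heq : {f : DeltaEnd p | Set.MapsTo (ψ f) L U}
      = Subtype.val ⁻¹' {f : C(X, X) | Set.MapsTo f K (p ⁻¹' U)} := by
    ext f
    simp only [Set.mem_setOf_eq, Set.mem_preimage]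
    constructor
    · intro h x hx
      have hm : p x ∈ L := by rw [← hKL]; exact Set.mem_image_of_mem p hx
      have := h hm
      rw [hψ f x] at this
      exact this
    · intro h y hy
      rw [← hKL] at hy
      obtain ⟨x, hx, rfl⟩ := hy
      rw [hψ f x]
      exact h hx
  rw [show {f : DeltaEnd p | Set.MapsTo (ψ f) L U} = _ from heq]
  exact (ContinuousMap.isOpen_setOf_mapsTo hKc (hU.preimage hp.continuous)).preimage
    continuous_subtype_val
end

section
/- Let Y be a locally compact Hausdorff space and p : X → Y a continuous surjective map that admits local cross sections: for every y ∈ Y there is an open neighborhood V of y and a continuous map f : V → X with p ∘ f = id_V. Then for every compact L ⊆ Y there exists a compact K ⊆ X with p(K) = L. -/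
/-- If `Y` is locally compact Hausdorff and the continuous surjection `p : X → Y`
admits local cross sections, then every compact `L ⊆ Y` is the image of some
compact `K ⊆ X`. -/
theorem propK_of_local_cross_sections
    {X Y : Type*} [TopologicalSpace X] [TopologicalSpace Y]
    [LocallyCompactSpace Y] [T2Space Y]
    {p : X → Y} (hc : Continuous p) (hs : Function.Surjective p)
    (hsect : ∀ y : Y, ∃ V : Set Y, IsOpen V ∧ y ∈ V ∧
      ∃ f : Y → X, ContinuousOn f V ∧ ∀ z ∈ V, p (f z) = z) :
    ∀ L : Set Y, IsCompact L → ∃ K : Set X, IsCompact K ∧ p '' K = L := by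
  intro L hL
  choose V hVopen hVmem f hfcont hfsec using hsect
  -- for each y, a compact neighborhood C y ⊆ V y
  have hC : ∀ y : Y, ∃ C ∈ nhds y, C ⊆ V y ∧ IsCompact C := fun y =>
    local_compact_nhds ((hVopen y).mem_nhds (hVmem y))
  choose C hCnhds hCsub hCcomp using hC
  obtain ⟨t, htL, hcover⟩ := hL.elim_nhds_subcover C (fun y _ => hCnhds y)
  refine ⟨⋃ y ∈ t, f y '' (C y ∩ L), ?_, ?_⟩
  · refine t.isCompact_biUnion (fun y _ => ?_)
    exact ((hCcomp y).inter_right hL.isClosed).image_of_continuousOn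
      ((hfcont y).mono (Set.Subset.trans Set.inter_subset_left (hCsub y)))
  · apply Set.Subset.antisymm
    · simp only [Set.image_iUnion]
      refine Set.iUnion₂_subset fun y _ => ?_
      rintro _ ⟨_, ⟨z, ⟨hzC, hzL⟩, rfl⟩, rfl⟩
      rwa [hfsec y z (hCsub y hzC)]
    · intro z hz
      obtain ⟨y, hy, hzC⟩ := Set.mem_iUnion₂.1 (hcover hz)
      refine (Set.mem_image _ _ _).2 ⟨f y z, Set.mem_biUnion hy ⟨z, ⟨hzC, hz⟩, rfl⟩, ?_⟩
      exact hfsec y z (hCsub y hzC)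
end

section
/- Let Y be a topological space, V(Y) its set of branch points (points y with H(y) ≠ {y}, where H(y) is the set of points not T₂-disjoint from y), and z ∈ V(Y). Then for any subset L ⊆ Y, the subspace B = (L \ V(Y)) ∪ {z} is Hausdorff. -/
/-- The Hausdorff closure of `y`: the set of points `z` that are not `T₂`-disjoint
from `y` in `Y`. -/
def HausdorffClosure {Y : Type*} [TopologicalSpace Y] (y : Y) : Set Y :=
  { z | ∀ U V : Set Y, IsOpen U → IsOpen V → y ∈ U → z ∈ V → (U ∩ V).Nonempty }

/-- The set of branch points of `Y`: points `y` with `H(y) ≠ {y}`. -/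
def BranchPoints (Y : Type*) [TopologicalSpace Y] : Set Y :=
  { y | ∃ z : Y, z ≠ y ∧ z ∈ HausdorffClosure y }

lemma sep_of_not_branch {Y : Type*} [TopologicalSpace Y] {a b : Y}
    (hne : b ≠ a) (ha : a ∉ BranchPoints Y) :
    ∃ U V : Set Y, IsOpen U ∧ IsOpen V ∧ a ∈ U ∧ b ∈ V ∧ U ∩ V = ∅ := by
  have hb : b ∉ HausdorffClosure a := fun h => ha ⟨b, hne, h⟩
  simp only [HausdorffClosure, Set.mem_setOf_eq] at hb
  push_neg at hb
  obtain ⟨U, V, hU, hV, haU, hbV, hdisj⟩ := hb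
  exact ⟨U, V, hU, hV, haU, hbV, hdisj⟩

/-- For a branch point `z` and any subset `L ⊆ Y`, the subspace
`B = (L \ V(Y)) ∪ {z}` is Hausdorff. -/
theorem hausdorff_of_remove_branchPoints
    {Y : Type*} [TopologicalSpace Y] (L : Set Y) (z : Y)
    (hz : z ∈ BranchPoints Y) :
    T2Space ((L \ BranchPoints Y) ∪ {z} : Set Y) := by
  constructor
  rintro ⟨a, ha⟩ ⟨b, hb⟩ hne
  have hab : a ≠ b := fun h => hne (by simpa using h)
  have key : (∃ U V : Set Y, IsOpen U ∧ IsOpen V ∧ a ∈ U ∧ b ∈ V ∧ U ∩ V = ∅) := by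
    rcases ha with ha | ha
    · obtain ⟨U, V, hU, hV, haU, hbV, hd⟩ := sep_of_not_branch hab.symm ha.2
      exact ⟨U, V, hU, hV, haU, hbV, hd⟩
    · rcases hb with hb | hb
      · obtain ⟨U, V, hU, hV, hbU, haV, hd⟩ := sep_of_not_branch hab hb.2
        exact ⟨V, U, hV, hU, haV, hbU, by rw [Set.inter_comm]; exact hd⟩
      · exact absurd (ha.trans hb.symm) hab
  obtain ⟨U, V, hU, hV, haU, hbV, hd⟩ := key
  refine ⟨Subtype.val ⁻¹' U, Subtype.val ⁻¹' V, hU.preimage continuous_subtype_val,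
    hV.preimage continuous_subtype_val, haU, hbV, ?_⟩
  rw [Set.disjoint_iff_inter_eq_empty]
  ext ⟨x, hx⟩
  simp only [Set.mem_inter_iff, Set.mem_preimage, Set.mem_empty_iff_false, iff_false]
  intro ⟨h1, h2⟩
  exact Set.eq_empty_iff_forall_notMem.mp hd x ⟨h1, h2⟩
end

section
/- Let a topological group G act continuously on a Hausdorff Baire space X such that G is a countable union of compact subsets, the action has at least two distinct orbits, and every orbit is dense in X. Then there exists a compact subset L of the orbit space Y = X/G (with the quotient topology) such that no compact subset K ⊆ X satisfies p(K) = L, where p : X → Y is the orbit projection. -/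
/-- Let a topological group `G` act continuously on a Hausdorff Baire space `X`,
where `G` is a countable union of compact sets, the action has at least two
orbits, and every orbit is dense. Then there is a compact subset `L` of the orbit
space `Y = X/G` that is not the image of any compact subset of `X` under the
orbit projection. -/
theorem no_compact_lift_of_dense_orbits
    {G X : Type*} [Group G] [TopologicalSpace G] [IsTopologicalGroup G]
    [TopologicalSpace X] [T2Space X] [BaireSpace X]
    [MulAction G X] [ContinuousSMul G X]
    (hσ : ∃ C : ℕ → Set G, (∀ i, IsCompact (C i)) ∧ (⋃ i, C i) = Set.univ)
    (h2 : ∃ x y : X, MulAction.orbit G x ≠ MulAction.orbit G y)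
    (hd : ∀ x : X, Dense (MulAction.orbit G x)) :
    ∃ L : Set (Quotient (MulAction.orbitRel G X)), IsCompact L ∧
      ∀ K : Set X, IsCompact K →
        Quotient.mk (MulAction.orbitRel G X) '' K ≠ L := by
  classical
  obtain ⟨C, hC, hCuniv⟩ := hσ
  obtain ⟨x₀, y₀, hxy⟩ := h2
  set p : X → Quotient (MulAction.orbitRel G X) := Quotient.mk _ with hp
  -- every nonempty open set in the quotient is the whole space
  have hopen : ∀ U : Set (Quotient (MulAction.orbitRel G X)),
      IsOpen U → U.Nonempty → U = Set.univ := by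
    intro U hU hne
    ext q
    simp only [Set.mem_univ, iff_true]
    obtain ⟨w, rfl⟩ := Quotient.exists_rep q
    have hpre : IsOpen (p ⁻¹' U) := hU.preimage continuous_quotient_mk'
    obtain ⟨v, hv1, hv2⟩ := (hd w).exists_mem_open hpre
      (by obtain ⟨q', hq'⟩ := hne; obtain ⟨z, rfl⟩ := Quotient.exists_rep q'
          exact ⟨z, hq'⟩)
    have : p v = Quotient.mk _ w := Quotient.sound (MulAction.orbitRel_apply.mpr hv1)
    rwa [← this]
  -- the candidate L : complement of the class of y₀
  refine ⟨{q | q ≠ p y₀}, ?_, ?_⟩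
  · -- compact since any nonempty open set is univ
    refine isCompact_of_finite_subcover fun {ι} U hU hcov => ?_
    have hx₀ : p x₀ ∈ {q | q ≠ p y₀} := by
      intro h
      exact hxy (MulAction.orbit_eq_iff.mpr (MulAction.orbitRel_apply.mp (Quotient.exact h)))
    obtain ⟨i, hi⟩ := Set.mem_iUnion.mp (hcov hx₀)
    refine ⟨{i}, ?_⟩
    have := hopen (U i) (hU i) ⟨_, hi⟩
    simp [this]
  · intro K hK hKL
    -- membership facts
    have hKmem : ∀ k ∈ K, MulAction.orbit G k ≠ MulAction.orbit G y₀ := by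
      intro k hk h
      have : p k ∈ {q | q ≠ p y₀} := hKL ▸ Set.mem_image_of_mem p hk
      exact this (Quotient.sound (MulAction.orbitRel_apply.mpr (h ▸ MulAction.mem_orbit_self k)))
    have hNE : Nonempty X := ⟨x₀⟩
    -- interior of the orbit of y₀ is empty
    have hintorb : interior (MulAction.orbit G y₀) = ∅ := by
      by_contra h
      obtain ⟨v, hv1, hv2⟩ := (hd x₀).exists_mem_open isOpen_interior
        (Set.nonempty_iff_ne_empty.mpr h)
      have hv2' : v ∈ MulAction.orbit G y₀ := interior_subset hv2
      exact hxy ((MulAction.orbit_eq_iff.mpr hv1).symm.trans (MulAction.orbit_eq_iff.mpr hv2'))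
    have hintc : interior ((MulAction.orbit G y₀)ᶜ) = ∅ := by
      rw [interior_compl, (hd y₀).closure_eq, Set.compl_univ]
    -- the countable closed cover
    set f : ℕ ⊕ ℕ → Set X := Sum.elim
      (fun i => (fun gk : G × X => gk.1 • gk.2) '' (C i ×ˢ K))
      (fun i => (fun g : G => g • y₀) '' C i) with hf
    have hfc : ∀ j, IsCompact (f j) := by
      rintro (i | i)
      · exact ((hC i).prod hK).image continuous_smul
      · exact (hC i).image (continuous_id.smul continuous_const)
    have hfu : ⋃ j, f j = Set.univ := by
      ext x
      simp only [Set.mem_univ, iff_true, Set.mem_iUnion]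
      by_cases hx : MulAction.orbit G x = MulAction.orbit G y₀
      · have : x ∈ MulAction.orbit G y₀ := hx ▸ MulAction.mem_orbit_self x
        obtain ⟨g, rfl⟩ := this
        obtain ⟨i, hi⟩ := Set.mem_iUnion.mp (hCuniv ▸ Set.mem_univ g)
        exact ⟨Sum.inr i, ⟨g, hi, rfl⟩⟩
      · have hxL : p x ∈ {q | q ≠ p y₀} := fun h =>
          hx (MulAction.orbit_eq_iff.mpr (MulAction.orbitRel_apply.mp (Quotient.exact h)))
        rw [← hKL] at hxL
        obtain ⟨k, hk, hpk⟩ := hxL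
        have : k ∈ MulAction.orbit G x := MulAction.orbitRel_apply.mp (Quotient.exact hpk)
        obtain ⟨g, hg⟩ := this
        obtain ⟨i, hi⟩ := Set.mem_iUnion.mp (hCuniv ▸ Set.mem_univ g⁻¹)
        exact ⟨Sum.inl i, ⟨(g⁻¹, k), ⟨hi, hk⟩, by simp [← hg]⟩⟩
    obtain ⟨j, hj⟩ := nonempty_interior_of_iUnion_of_closed
      (fun j => (hfc j).isClosed) hfu
    rcases j with i | i
    · -- f (inl i) ⊆ (orbit y₀)ᶜ, whose interior is empty
      have hsub : f (Sum.inl i) ⊆ (MulAction.orbit G y₀)ᶜ := by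
        rintro _ ⟨⟨g, k⟩, ⟨hg, hk⟩, rfl⟩ hmem
        exact hKmem k hk ((MulAction.orbit_eq_iff.mpr (MulAction.mem_orbit k g)).symm.trans
          (MulAction.orbit_eq_iff.mpr hmem))
      have := interior_mono hsub hj.choose_spec
      rw [hintc] at this
      exact this
    · have hsub : f (Sum.inr i) ⊆ MulAction.orbit G y₀ := by
        rintro _ ⟨g, hg, rfl⟩
        exact MulAction.mem_orbit y₀ g
      have := interior_mono hsub hj.choose_spec
      rw [hintorb] at this
      exact this
end

section
/- Let f : S¹ → S¹ be the rotation z ↦ z·e^{2πiα} with α irrational, let Δ be the partition of S¹ into orbits of the ℤ-action generated by f, and p : S¹ → Y the projection onto the orbit space with the quotient topology. Then there exists a compact subset L ⊆ Y such that no compact K ⊆ S¹ satisfies p(K) = L. -/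
open Real

/-- The orbit relation of the `ℤ`-action on the circle generated by the rotation
`z ↦ z · e^{2πiα}`: `x ~ y` iff `y = f^k(x)` for some `k ∈ ℤ`. -/
def rotOrbitRel (α : ℝ) (x y : Circle) : Prop :=
  ∃ k : ℤ, (Circle.exp (2 * π * α)) ^ k * x = y

lemma circle_exp_zpow (t : ℝ) (k : ℤ) : Circle.exp (k * t) = Circle.exp t ^ k := by
  induction k using Int.induction_on with
  | zero => simp
  | succ i ih =>
      have h : (((i : ℤ) + 1 : ℤ) : ℝ) * t = ((i : ℤ) : ℝ) * t + t := by push_cast; ring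
      rw [h, Circle.exp_add, ih, zpow_add_one]
  | pred i ih =>
      have h : ((-(i : ℤ) - 1 : ℤ) : ℝ) * t = ((-(i : ℤ) : ℤ) : ℝ) * t - t := by push_cast; ring
      rw [h, Circle.exp_sub, ih, zpow_sub_one]
      exact div_eq_mul_inv _ _

lemma rotOrbitRel_equiv (α : ℝ) : Equivalence (rotOrbitRel α) := by
  constructor
  · intro x; exact ⟨0, by simp⟩
  · rintro x y ⟨k, rfl⟩; exact ⟨-k, by rw [← mul_assoc, ← zpow_add]; simp⟩
  · rintro x y z ⟨k, rfl⟩ ⟨l, rfl⟩; exact ⟨l + k, by rw [← mul_assoc, ← zpow_add]⟩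

lemma dense_subgroup (α : ℝ) (hα : Irrational α) :
    Dense ((AddSubgroup.closure {α, 1} : AddSubgroup ℝ) : Set ℝ) := by
  rcases AddSubgroup.dense_or_cyclic (AddSubgroup.closure {α, 1}) with h | ⟨a, ha⟩
  · exact h
  · exfalso
    have h1 : (1 : ℝ) ∈ AddSubgroup.closure ({α, 1} : Set ℝ) :=
      AddSubgroup.subset_closure (by simp)
    have h2 : α ∈ AddSubgroup.closure ({α, 1} : Set ℝ) :=
      AddSubgroup.subset_closure (by simp)
    rw [ha, AddSubgroup.mem_closure_singleton] at h1 h2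
    obtain ⟨n, hn⟩ := h1
    obtain ⟨m, hm⟩ := h2
    have hn0 : (n : ℝ) ≠ 0 := by
      rintro h
      simp only [zsmul_eq_mul] at hn
      rw [h, zero_mul] at hn; exact one_ne_zero hn.symm
    apply hα
    refine ⟨(m : ℚ) / (n : ℚ), ?_⟩
    simp only [zsmul_eq_mul] at hn hm
    have key : α * n = m := by rw [← hm, mul_assoc, mul_comm a, hn, mul_one]
    push_cast
    rw [div_eq_iff hn0]
    exact key.symm

lemma orbit_dense (α : ℝ) (hα : Irrational α) (x : Circle) :
    Dense {y : Circle | rotOrbitRel α x y} := by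
  have h2π : (2 * π : ℝ) ≠ 0 := by positivity
  set g : ℝ → Circle := fun s => Circle.exp (2 * π * s) * x with hg
  have hgc : Continuous g := (Circle.exp.continuous.comp (continuous_const.mul continuous_id)).mul continuous_const
  have hgs : Function.Surjective g := by
    intro y
    refine ⟨Complex.arg (y * x⁻¹ : Circle) / (2 * π), ?_⟩
    simp only [hg]
    rw [mul_div_cancel₀ _ h2π, Circle.exp_arg]
    group
  have hd : Dense (g '' ((AddSubgroup.closure {α, 1} : AddSubgroup ℝ) : Set ℝ)) :=
    hgs.denseRange.dense_image hgc (dense_subgroup α hα)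
  refine hd.mono ?_
  rintro _ ⟨s, hs, rfl⟩
  rw [SetLike.mem_coe, AddSubgroup.mem_closure_pair] at hs
  obtain ⟨k, n, rfl⟩ := hs
  refine ⟨k, ?_⟩
  simp only [hg, zsmul_eq_mul, mul_one]
  have : 2 * π * (k * α + n) = k * (2 * π * α) + n * (2 * π) := by ring
  rw [this, Circle.exp_add, circle_exp_zpow, circle_exp_zpow, Circle.exp_two_pi,
    one_zpow, mul_one]

lemma exp_pow_injective (α : ℝ) (hα : Irrational α) :
    Function.Injective (fun k : ℤ => Circle.exp (2 * π * α) ^ k) := by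
  intro k l hkl
  simp only [← circle_exp_zpow] at hkl
  obtain ⟨m, hm⟩ := Circle.exp_eq_exp.1 hkl
  by_contra hne
  have hkl0 : ((k : ℝ) - l) ≠ 0 := by
    intro h
    apply hne
    exact_mod_cast sub_eq_zero.1 h
  apply hα
  refine ⟨(m : ℚ) / ((k : ℚ) - l), ?_⟩
  push_cast
  rw [div_eq_iff hkl0]
  have hπ : (2 * π : ℝ) ≠ 0 := by positivity
  have : ((k : ℝ) - l) * (2 * π * α) = m * (2 * π) := by linarith [hm]
  field_simp at this ⊢
  nlinarith [this, Real.pi_pos]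

lemma singleton_interior_empty (α : ℝ) (hα : Irrational α) (x : Circle) :
    interior ({x} : Set Circle) = ∅ := by
  by_contra h
  have hx : IsOpen ({x} : Set Circle) := by
    rcases Set.nonempty_iff_ne_empty.2 h with ⟨y, hy⟩
    have heq : interior ({x} : Set Circle) = {x} := by
      apply Set.Subset.antisymm interior_subset
      rcases interior_subset hy with rfl
      exact Set.singleton_subset_iff.2 hy
    rw [← heq]; exact isOpen_interior
  have hdisc : DiscreteTopology Circle := by
    rw [discreteTopology_iff_isOpen_singleton]
    intro y
    have heq : ({y} : Set Circle) = (Homeomorph.mulLeft (y * x⁻¹)) '' {x} := by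
      simp [Homeomorph.mulLeft]
    rw [heq]
    exact (Homeomorph.mulLeft (y * x⁻¹)).isOpenMap _ hx
  have h1 : Finite Circle := finite_of_compact_of_discrete
  have h2 : Infinite Circle := Infinite.of_injective _ (exp_pow_injective α hα)
  exact absurd h2 (not_infinite_iff_finite.2 h1)

/-- For an irrational rotation of the circle, there is a compact subset `L` of the
orbit space `Y` (with the quotient topology) which is not the image of any compact
subset of `S¹` under the natural projection. -/
theorem no_compact_lift_irrational_rotation
    (α : ℝ) (hα : Irrational α) :
    ∃ L : Set (Quot (rotOrbitRel α)), IsCompact L ∧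
      ∀ K : Set Circle, IsCompact K → Quot.mk (rotOrbitRel α) '' K ≠ L := by
  classical
  set p : Circle → Quot (rotOrbitRel α) := Quot.mk (rotOrbitRel α) with hp
  -- every nonempty open set in the quotient is everything
  have hopen : ∀ U : Set (Quot (rotOrbitRel α)), IsOpen U → U.Nonempty → U = Set.univ := by
    rintro U hU ⟨y, hy⟩
    have hV : IsOpen (p ⁻¹' U) := hU.preimage continuous_quot_mk
    obtain ⟨x, rfl⟩ := Quot.exists_rep y
    have hVne : (p ⁻¹' U).Nonempty := ⟨x, hy⟩
    ext w
    simp only [Set.mem_univ, iff_true]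
    obtain ⟨z, rfl⟩ := Quot.exists_rep w
    obtain ⟨v, hvV, hvO⟩ := (orbit_dense α hα z).inter_open_nonempty _ hV hVne
    have heq : p z = p v := Quot.sound hvO
    show p z ∈ U
    rw [heq]
    exact hvV
  -- every subset of the quotient is compact
  have hcomp : ∀ L : Set (Quot (rotOrbitRel α)), IsCompact L := by
    intro L
    refine isCompact_of_finite_subcover ?_
    intro ι U hUo hLU
    rcases L.eq_empty_or_nonempty with rfl | ⟨y, hy⟩
    · exact ⟨∅, by simp⟩
    · obtain ⟨i, hi⟩ := Set.mem_iUnion.1 (hLU hy)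
      refine ⟨{i}, ?_⟩
      have := hopen (U i) (hUo i) ⟨y, hi⟩
      intro z _
      simp [this]
  refine ⟨{p 1}ᶜ, hcomp _, ?_⟩
  intro K hK hKL
  set c : Circle := Circle.exp (2 * π * α) with hc
  -- K is disjoint from the orbit of 1
  have hdisj : ∀ z : Circle, rotOrbitRel α 1 z → z ∉ K := by
    intro z hz hzK
    have hmem : p z ∈ ({p 1}ᶜ : Set (Quot (rotOrbitRel α))) := hKL ▸ ⟨z, hzK, rfl⟩
    exact hmem (Quot.sound hz).symm
  have hKint : interior K = ∅ := by
    rw [interior_eq_empty_iff_dense_compl]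
    exact (orbit_dense α hα 1).mono fun z hz => hdisj z hz
  -- the countable family of closed sets covering the circle
  set F : ℤ ⊕ ℤ → Set Circle :=
    Sum.elim (fun k => (fun w => c ^ k * w) '' K) (fun k => {c ^ k * 1}) with hF
  have hFclosed : ∀ i, IsClosed (F i) := by
    rintro (k | k)
    · exact ((hK.image (continuous_const.mul continuous_id)).isClosed)
    · exact isClosed_singleton
  have hFcover : ⋃ i, F i = Set.univ := by
    ext z
    simp only [Set.mem_univ, iff_true, Set.mem_iUnion]
    by_cases hz : p z = p 1
    · have : rotOrbitRel α 1 z :=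
        (rotOrbitRel_equiv α).symm (((rotOrbitRel_equiv α).eqvGen_iff).1 (Quot.eqvGen_exact hz))
      obtain ⟨k, hk⟩ := this
      exact ⟨Sum.inr k, by simpa [hF] using hk.symm⟩
    · have : p z ∈ p '' K := by rw [hKL]; exact hz
      obtain ⟨w, hwK, hw⟩ := this
      have : rotOrbitRel α w z :=
        ((rotOrbitRel_equiv α).eqvGen_iff).1 (Quot.eqvGen_exact hw)
      obtain ⟨k, hk⟩ := this
      exact ⟨Sum.inl k, ⟨w, hwK, hk⟩⟩
  obtain ⟨i, hi⟩ := nonempty_interior_of_iUnion_of_closed hFclosed hFcover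
  rcases i with k | k
  · have himg : (fun w => c ^ k * w) '' K = (Homeomorph.mulLeft (c ^ k)) '' K := rfl
    have : interior (F (Sum.inl k)) = ∅ := by
      simp only [hF, Sum.elim_inl, himg, ← Homeomorph.image_interior, hKint, Set.image_empty]
    rw [this] at hi
    exact hi.ne_empty rfl
  · have : interior (F (Sum.inr k)) = ∅ := singleton_interior_empty α hα _
    rw [this] at hi
    exact hi.ne_empty rfl
end
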